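/- arXiv:2010.00135 — 2 statements merged into one kernel-verified Lean document; each statement's English description precedes it below -/
import Mathlib

section
/- (Prékopa–Leindler inequality for k functions) Let f_1, …, f_k and h be nonnegative integrable real functions on ℝ^n and let λ_1, …, λ_k ≥ 0 with ∑_{i=1}^k λ_i = 1 be such that h(∑_{i=1}^k λ_i x_i) ≥ ∏_{i=1}^k f_i(x_i)^{λ_i} for all x_1, …, x_k ∈ ℝ^n. Then ∏_{i=1}^k (∫_{ℝ^n} f_i dx)^{λ_i} ≤ ∫_{ℝ^n} h dx. -/
open MeasureTheory Real Set
open scoped ENNReal Pointwise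

set_option maxHeartbeats 1000000

lemma bm_compact (K L : Set ℝ) (hK : IsCompact K) (hL : IsCompact L)
    (hK0 : K.Nonempty) (hL0 : L.Nonempty) :
    volume K + volume L ≤ volume (K + L) := by
  set a := sSup K with ha
  set b := sInf L with hb
  have haK : a ∈ K := hK.sSup_mem hK0
  have hbL : b ∈ L := hL.sInf_mem hL0
  have h1 : (b +ᵥ K) ∪ (a +ᵥ L) ⊆ K + L := by
    rintro x (⟨k, hk, rfl⟩ | ⟨l, hl, rfl⟩)
    · simpa [add_comm] using Set.add_mem_add hk hbL
    · exact Set.add_mem_add haK hl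
  have h2 : (b +ᵥ K) ∩ (a +ᵥ L) ⊆ {a + b} := by
    rintro x ⟨⟨k, hk, rfl⟩, ⟨l, hl, hx⟩⟩
    have hk' : k ≤ a := le_csSup hK.bddAbove hk
    have hl' : b ≤ l := csInf_le hL.bddBelow hl
    have h3 : b + k = a + l := hx.symm
    have : b + k = a + b := le_antisymm (by linarith) (by linarith)
    simpa using this
  have hmeas : MeasurableSet (a +ᵥ L) := (hL.vadd a).measurableSet
  calc volume K + volume L = volume (b +ᵥ K) + volume (a +ᵥ L) := by
        rw [measure_vadd, measure_vadd]
    _ = volume ((b +ᵥ K) ∪ (a +ᵥ L)) + volume ((b +ᵥ K) ∩ (a +ᵥ L)) :=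
        (measure_union_add_inter _ hmeas).symm
    _ ≤ volume (K + L) + volume {a + b} :=
        add_le_add (measure_mono h1) (measure_mono h2)
    _ = volume (K + L) := by simp

lemma smul_compact (c : ℝ) (K : Set ℝ) (hK : IsCompact K) : IsCompact (c • K) :=
  hK.image (continuous_const.mul continuous_id)

lemma volume_smul_real (c : ℝ) (hc : 0 ≤ c) (A : Set ℝ) :
    volume (c • A) = ENNReal.ofReal c * volume A := by
  rw [Measure.addHaar_smul]
  simp [abs_of_nonneg hc]

lemma mem_finsetSum {ι : Type*} {M : Type*} [AddCommMonoid M] (s : Finset ι) (S : ι → Set M) (z : M) :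
    z ∈ ∑ i ∈ s, S i ↔ ∃ x : ι → M, (∀ i ∈ s, x i ∈ S i) ∧ z = ∑ i ∈ s, x i := by
  classical
  induction s using Finset.cons_induction generalizing z with
  | empty => simp [eq_comm]
  | cons a s ha ih =>
    simp only [Finset.sum_cons]
    constructor
    · intro hz
      obtain ⟨u, hu, v, hv, huv⟩ := Set.mem_add.mp hz
      obtain ⟨x, hx, rfl⟩ := (ih v).mp hv
      refine ⟨Function.update x a u, ?_, ?_⟩
      · intro i hi
        rcases Finset.mem_cons.mp hi with rfl | his
        · simpa using hu
        · rw [Function.update_of_ne (by rintro rfl; exact ha his)]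
          exact hx i his
      · rw [Function.update_self, ← huv]
        congr 1
        exact (Finset.sum_congr rfl fun i hi => by
          rw [Function.update_of_ne (by rintro rfl; exact ha hi)]).symm
    · rintro ⟨x, hx, rfl⟩
      exact Set.add_mem_add (hx a (Finset.mem_cons_self a s))
        ((ih _).mpr ⟨x, fun i hi => hx i (Finset.mem_cons.mpr (Or.inr hi)), rfl⟩)

lemma finsetSum_subset {ι M : Type*} [AddCommMonoid M] (s : Finset ι) (S T : ι → Set M)
    (h : ∀ i ∈ s, S i ⊆ T i) : (∑ i ∈ s, S i) ⊆ ∑ i ∈ s, T i := by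
  intro z hz
  obtain ⟨x, hx, rfl⟩ := (_root_.mem_finsetSum s S z).mp hz
  exact (_root_.mem_finsetSum s T _).mpr ⟨x, fun i hi => h i hi (hx i hi), rfl⟩

lemma finsetSum_nonempty {ι M : Type*} [AddCommMonoid M] (s : Finset ι) (S : ι → Set M)
    (h : ∀ i ∈ s, (S i).Nonempty) : (∑ i ∈ s, S i).Nonempty := by
  classical
  choose x hx using h
  exact ⟨∑ i ∈ s.attach, x i i.2, (_root_.mem_finsetSum s S _).mpr
    ⟨fun i => if hi : i ∈ s then x i hi else 0, fun i hi => by simp [hi, hx],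
     by rw [← Finset.sum_attach s]; exact Finset.sum_congr rfl fun i _ => by simp [i.2]⟩⟩

lemma finsetSum_compact {ι : Type*} (s : Finset ι) (K : ι → Set ℝ)
    (hK : ∀ i ∈ s, IsCompact (K i)) : IsCompact (∑ i ∈ s, K i) := by
  classical
  induction s using Finset.cons_induction with
  | empty =>
    rw [Finset.sum_empty]
    exact isCompact_singleton
  | cons a s ha ih =>
    rw [Finset.sum_cons]
    exact (hK a (Finset.mem_cons_self a s)).add
      (ih fun i hi => hK i (Finset.mem_cons.mpr (Or.inr hi)))

lemma bm_compact_many {ι : Type*} (s : Finset ι) (c : ι → ℝ) (hc : ∀ i ∈ s, 0 < c i)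
    (K : ι → Set ℝ) (hK : ∀ i ∈ s, IsCompact (K i)) (hK0 : ∀ i ∈ s, (K i).Nonempty) :
    ∑ i ∈ s, ENNReal.ofReal (c i) * volume (K i) ≤ volume (∑ i ∈ s, c i • K i) := by
  classical
  induction s using Finset.cons_induction with
  | empty => simp
  | cons a s ha ih =>
    rw [Finset.sum_cons, Finset.sum_cons]
    have hmem : ∀ i ∈ s, i ∈ Finset.cons a s ha := fun i hi => Finset.mem_cons.mpr (Or.inr hi)
    have hca := hc a (Finset.mem_cons_self a s)
    calc ENNReal.ofReal (c a) * volume (K a) + ∑ i ∈ s, ENNReal.ofReal (c i) * volume (K i)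
        ≤ volume (c a • K a) + volume (∑ i ∈ s, c i • K i) := by
          rw [volume_smul_real _ hca.le]
          exact add_le_add le_rfl (ih (fun i hi => hc i (hmem i hi))
            (fun i hi => hK i (hmem i hi)) (fun i hi => hK0 i (hmem i hi)))
      _ ≤ volume (c a • K a + ∑ i ∈ s, c i • K i) :=
          bm_compact _ _ (smul_compact _ _ (hK a (Finset.mem_cons_self a s)))
            (finsetSum_compact s _ fun i hi => smul_compact _ _ (hK i (hmem i hi)))
            ((hK0 a (Finset.mem_cons_self a s)).smul_set)
            (finsetSum_nonempty s _ fun i hi => (hK0 i (hmem i hi)).smul_set)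

lemma bm_many {ι : Type*} (s : Finset ι) (c : ι → ℝ) (hc : ∀ i ∈ s, 0 < c i)
    (A : ι → Set ℝ) (hA : ∀ i ∈ s, MeasurableSet (A i)) (hA0 : ∀ i ∈ s, (A i).Nonempty) :
    ∑ i ∈ s, ENNReal.ofReal (c i) * volume (A i) ≤ volume (∑ i ∈ s, c i • A i) := by
  classical
  choose a hamem using hA0
  by_cases htop : ∃ j ∈ s, volume (A j) = ⊤
  · -- the right side is infinite
    obtain ⟨j, hjs, hj⟩ := htop
    set v : ℝ := ∑ i ∈ (s.erase j).attach, c i * a i (Finset.mem_of_mem_erase i.2) with hv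
    have hsub : (v +ᵥ (c j • A j)) ⊆ ∑ i ∈ s, c i • A i := by
      rintro x ⟨y, ⟨z, hz, rfl⟩, rfl⟩
      refine (_root_.mem_finsetSum s _ _).mpr
        ⟨fun i => if hi : i ∈ s then (if i = j then c j * z else c i * a i hi) else 0, ?_, ?_⟩
      · intro i hi
        simp only [dif_pos hi]
        by_cases hij : i = j
        · subst hij; simp only [if_pos rfl]; exact ⟨z, hz, rfl⟩
        · simp only [if_neg hij]; exact ⟨a i hi, hamem i hi, rfl⟩
      · rw [← Finset.add_sum_erase _ _ hjs]
        simp only [dif_pos hjs, if_pos rfl]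
        rw [vadd_eq_add, add_comm]
        congr 1
        rw [hv, ← Finset.sum_attach (s.erase j)
          fun i => if hi : i ∈ s then (if i = j then c j * z else c i * a i hi) else 0]
        refine Finset.sum_congr rfl fun i _ => ?_
        have hi' : i.1 ∈ s := Finset.mem_of_mem_erase i.2
        have hij : i.1 ≠ j := Finset.ne_of_mem_erase i.2
        simp [dif_pos hi', if_neg hij]
    have : volume (∑ i ∈ s, c i • A i) = ⊤ := by
      rw [eq_top_iff]
      calc (⊤ : ℝ≥0∞) = ENNReal.ofReal (c j) * volume (A j) := by
            rw [hj, ENNReal.mul_top]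
            simp [ENNReal.ofReal_eq_zero, not_le.mpr (hc j hjs)]
        _ = volume (c j • A j) := (volume_smul_real _ (hc j hjs).le _).symm
        _ = volume (v +ᵥ (c j • A j)) := (measure_vadd volume v _).symm
        _ ≤ volume (∑ i ∈ s, c i • A i) := measure_mono hsub
    rw [this]
    exact le_top
  · push_neg at htop
    rcases eq_top_or_lt_top (volume (∑ i ∈ s, c i • A i)) with hV | hV
    · rw [hV]; exact le_top
    refine ENNReal.le_of_forall_pos_le_add fun ε hε _ => ?_
    set T : ℝ := (∑ i ∈ s, c i) + 1 with hT
    have hT0 : 0 < T := by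
      have : 0 ≤ ∑ i ∈ s, c i := Finset.sum_nonneg fun i hi => (hc i hi).le
      linarith
    set δ : ℝ≥0∞ := (ε : ℝ≥0∞) / ENNReal.ofReal T with hδ
    have hδ0 : δ ≠ 0 := by
      simp only [hδ, ne_eq, ENNReal.div_eq_zero_iff]
      push_neg
      exact ⟨by exact_mod_cast hε.ne', ENNReal.ofReal_ne_top⟩
    have hKex : ∀ i ∈ s, ∃ K, K ⊆ A i ∧ IsCompact K ∧ K.Nonempty ∧
        volume (A i) ≤ volume K + δ := by
      intro i hi
      obtain ⟨K, hKA, hKc, hKv⟩ := (hA i hi).exists_isCompact_lt_add (htop i hi) hδ0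
      refine ⟨K ∪ {a i hi}, ?_, hKc.union isCompact_singleton, ⟨_, Or.inr rfl⟩, ?_⟩
      · exact Set.union_subset hKA (by simpa using hamem i hi)
      · exact le_trans hKv.le (add_le_add (measure_mono Set.subset_union_left) le_rfl)
    choose K hKA hKc hK0 hKv using hKex
    calc ∑ i ∈ s, ENNReal.ofReal (c i) * volume (A i)
        = ∑ i ∈ s.attach, ENNReal.ofReal (c i) * volume (A i) :=
          (Finset.sum_attach s fun i => ENNReal.ofReal (c i) * volume (A i)).symm
      _ ≤ ∑ i ∈ s.attach, ENNReal.ofReal (c i) * (volume (K i i.2) + δ) :=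
          Finset.sum_le_sum fun i _ => mul_le_mul_right (hKv i i.2) _
      _ = (∑ i ∈ s.attach, ENNReal.ofReal (c i) * volume (K i i.2))
            + (∑ i ∈ s.attach, ENNReal.ofReal (c i)) * δ := by
          rw [Finset.sum_mul, ← Finset.sum_add_distrib]
          exact Finset.sum_congr rfl fun i _ => mul_add _ _ _
      _ ≤ volume (∑ i ∈ s.attach, c i • K i i.2) + (∑ i ∈ s.attach, ENNReal.ofReal (c i)) * δ := by
          refine add_le_add ?_ le_rfl
          exact bm_compact_many s.attach (fun i => c i) (fun i _ => hc i i.2)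
            (fun i => K i i.2) (fun i _ => hKc i i.2) (fun i _ => hK0 i i.2)
      _ ≤ volume (∑ i ∈ s, c i • A i) + (∑ i ∈ s.attach, ENNReal.ofReal (c i)) * δ := by
          refine add_le_add (measure_mono ?_) le_rfl
          rw [← Finset.sum_attach s fun i => c i • A i]
          exact finsetSum_subset _ _ _ fun i _ => Set.smul_set_mono (hKA i i.2)
      _ ≤ volume (∑ i ∈ s, c i • A i) + ε := by
          refine add_le_add le_rfl ?_
          have h1 : (∑ i ∈ s.attach, ENNReal.ofReal (c i)) ≤ ENNReal.ofReal T := by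
            rw [Finset.sum_attach s fun i => ENNReal.ofReal (c i),
              ← ENNReal.ofReal_sum_of_nonneg fun i hi => (hc i hi).le]
            exact ENNReal.ofReal_le_ofReal (by linarith)
          calc (∑ i ∈ s.attach, ENNReal.ofReal (c i)) * δ ≤ ENNReal.ofReal T * δ :=
                mul_le_mul_left h1 _
            _ ≤ ε := by
                rw [hδ, mul_comm, ENNReal.div_mul_cancel (by simpa using hT0) ENNReal.ofReal_ne_top]

lemma ofReal_finset_prod {ι : Type*} (s : Finset ι) (g : ι → ℝ) (hg : ∀ i ∈ s, 0 ≤ g i) :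
    ENNReal.ofReal (∏ i ∈ s, g i) = ∏ i ∈ s, ENNReal.ofReal (g i) := by
  classical
  induction s using Finset.cons_induction with
  | empty => simp
  | cons a s ha ih =>
    rw [Finset.prod_cons, Finset.prod_cons, ENNReal.ofReal_mul (hg a (Finset.mem_cons_self a s)),
      ih fun i hi => hg i (Finset.mem_cons.mpr (Or.inr hi))]

lemma prod_rpow_eq_rpow_sum {ι : Type*} (s : Finset ι) (lam : ι → ℝ) (t : ℝ≥0∞)
    (ht0 : t ≠ 0) (htop : t ≠ ⊤) :
    ∏ i ∈ s, t ^ lam i = t ^ (∑ i ∈ s, lam i) := by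
  classical
  induction s using Finset.cons_induction with
  | empty => simp
  | cons a s ha ih =>
    rw [Finset.prod_cons, Finset.sum_cons, ENNReal.rpow_add _ _ ht0 htop, ih]

lemma ennreal_am_gm {ι : Type*} (s : Finset ι) (w : ι → ℝ) (hw : ∀ i ∈ s, 0 ≤ w i)
    (hw' : ∑ i ∈ s, w i = 1) (a : ι → ℝ≥0∞) (ha : ∀ i ∈ s, a i ≠ ⊤) :
    ∏ i ∈ s, a i ^ w i ≤ ∑ i ∈ s, ENNReal.ofReal (w i) * a i := by
  have key := Real.geom_mean_le_arith_mean_weighted s w (fun i => (a i).toReal) hw hw'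
    (fun i _ => ENNReal.toReal_nonneg)
  calc ∏ i ∈ s, a i ^ w i
      = ∏ i ∈ s, ENNReal.ofReal ((a i).toReal ^ w i) := by
        refine Finset.prod_congr rfl fun i hi => ?_
        rw [← ENNReal.ofReal_rpow_of_nonneg ENNReal.toReal_nonneg (hw i hi),
          ENNReal.ofReal_toReal (ha i hi)]
    _ = ENNReal.ofReal (∏ i ∈ s, (a i).toReal ^ w i) :=
        (ofReal_finset_prod _ _ fun i hi => Real.rpow_nonneg ENNReal.toReal_nonneg _).symm
    _ ≤ ENNReal.ofReal (∑ i ∈ s, w i * (a i).toReal) := ENNReal.ofReal_le_ofReal key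
    _ = ∑ i ∈ s, ENNReal.ofReal (w i * (a i).toReal) :=
        ENNReal.ofReal_sum_of_nonneg fun i hi =>
          mul_nonneg (hw i hi) ENNReal.toReal_nonneg
    _ = ∑ i ∈ s, ENNReal.ofReal (w i) * a i := by
        refine Finset.sum_congr rfl fun i hi => ?_
        rw [ENNReal.ofReal_mul (hw i hi), ENNReal.ofReal_toReal (ha i hi)]

lemma iSup_finset_prod_monotone {ι : Type*} (s : Finset ι) (g : ι → ℕ → ℝ≥0∞)
    (hg : ∀ i ∈ s, Monotone (g i)) :
    ∏ i ∈ s, (⨆ n, g i n) = ⨆ n, ∏ i ∈ s, g i n := by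
  classical
  induction s using Finset.cons_induction with
  | empty => simp
  | cons a s ha ih =>
    simp only [Finset.prod_cons]
    rw [ih fun i hi => hg i (Finset.mem_cons.mpr (Or.inr hi))]
    apply le_antisymm
    · rw [ENNReal.iSup_mul]
      refine iSup_le fun n => ?_
      rw [ENNReal.mul_iSup]
      refine iSup_le fun m => ?_
      refine le_iSup_of_le (max n m) ?_
      exact mul_le_mul' (hg a (Finset.mem_cons_self a s) (le_max_left n m))
        (Finset.prod_le_prod' fun i hi =>
          hg i (Finset.mem_cons.mpr (Or.inr hi)) (le_max_right n m))
    · refine iSup_le fun n => ?_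
      exact mul_le_mul' (le_iSup _ n) (le_iSup (fun n => ∏ i ∈ s, g i n) n)

lemma PL1_nice {ι : Type*} (s : Finset ι) (lam : ι → ℝ) (hpos : ∀ i ∈ s, 0 < lam i)
    (hsum : ∑ i ∈ s, lam i = 1)
    (f : ι → ℝ → ℝ≥0∞) (hf : ∀ i ∈ s, Measurable (f i))
    (h : ℝ → ℝ≥0∞) (hh : Measurable h)
    (hfin : ∀ i ∈ s, ∫⁻ x, f i x ≠ ⊤)
    (hfpos : ∀ i ∈ s, 0 < ∫⁻ x, f i x)
    (hbdd : ∀ i ∈ s, essSup (f i) volume ≠ ⊤)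
    (hcond : ∀ x : ι → ℝ, ∏ i ∈ s, f i (x i) ^ lam i ≤ h (∑ i ∈ s, lam i * x i)) :
    ∏ i ∈ s, (∫⁻ x, f i x) ^ lam i ≤ ∫⁻ x, h x := by
  classical
  set M : ι → ℝ≥0∞ := fun i => essSup (f i) volume with hM
  have hM_pos : ∀ i ∈ s, 0 < M i := by
    intro i hi
    rcases pos_iff_ne_zero.mp (hfpos i hi) with h0
    rw [pos_iff_ne_zero]
    intro hM0
    have : f i =ᵐ[volume] 0 := ENNReal.essSup_eq_zero_iff.mp hM0
    refine h0 ?_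
    rw [lintegral_congr_ae this]
    simp
  set C : ℝ≥0∞ := ∏ i ∈ s, M i ^ lam i with hC
  have hC_pos : 0 < C := by
    rw [hC, pos_iff_ne_zero]
    rw [Finset.prod_ne_zero_iff]
    intro i hi
    exact (ENNReal.rpow_pos (hM_pos i hi) (hbdd i hi)).ne'
  have hC_top : C ≠ ⊤ := by
    rw [hC]
    exact (ENNReal.prod_lt_top fun i hi =>
      (ENNReal.rpow_lt_top_of_nonneg (hpos i hi).le (hbdd i hi))).ne
  set g : ι → ℝ → ℝ≥0∞ := fun i x => f i x * (M i)⁻¹ with hg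
  have hg_meas : ∀ i ∈ s, Measurable (g i) := fun i hi => (hf i hi).mul_const _
  have hg_lint : ∀ i ∈ s, ∫⁻ x, g i x = (∫⁻ x, f i x) * (M i)⁻¹ := fun i hi =>
    lintegral_mul_const _ (hf i hi)
  have hg_fin : ∀ i ∈ s, ∫⁻ x, g i x ≠ ⊤ := by
    intro i hi
    rw [hg_lint i hi]
    exact ENNReal.mul_ne_top (hfin i hi) (ENNReal.inv_ne_top.mpr (hM_pos i hi).ne')
  have hg_essSup : ∀ i ∈ s, essSup (g i) volume = 1 := by
    intro i hi
    have heq : g i = fun x => (M i)⁻¹ * f i x := funext fun x => mul_comm _ _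
    rw [heq, ENNReal.essSup_const_mul, ENNReal.inv_mul_cancel (hM_pos i hi).ne' (hbdd i hi)]
  have hg_le1 : ∀ i ∈ s, ∀ᵐ x, g i x ≤ 1 := by
    intro i hi
    have := ENNReal.ae_le_essSup (μ := volume) (g i)
    rw [hg_essSup i hi] at this
    exact this
  -- superlevel sets
  set A : ι → ℝ → Set ℝ := fun i t => {x | ENNReal.ofReal t ≤ g i x} with hA
  have hA_meas : ∀ i ∈ s, ∀ t : ℝ, MeasurableSet (A i t) := fun i hi t =>
    measurableSet_le measurable_const (hg_meas i hi)
  have hA_pos : ∀ i ∈ s, ∀ t ∈ Ioo (0:ℝ) 1, 0 < volume (A i t) := by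
    intro i hi t ht
    rw [pos_iff_ne_zero]
    intro h0
    have hae : ∀ᵐ x, ¬ (ENNReal.ofReal t ≤ g i x) := by
      rw [ae_iff]
      simpa using h0
    have : essSup (g i) volume ≤ ENNReal.ofReal t :=
      essSup_le_of_ae_le _ (hae.mono fun x hx => (not_le.mp hx).le)
    rw [hg_essSup i hi] at this
    exact absurd (this.trans_lt (ENNReal.ofReal_lt_one.mpr ht.2)) (lt_irrefl _)
  have hA_ne : ∀ i ∈ s, ∀ t ∈ Ioo (0:ℝ) 1, (A i t).Nonempty := fun i hi t ht =>
    nonempty_of_measure_ne_zero (hA_pos i hi t ht).ne'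
  set h' : ℝ → ℝ≥0∞ := fun y => h y * C⁻¹ with hh'
  -- key 1 : slicewise inequality
  have key1 : ∀ t ∈ Ioo (0:ℝ) 1,
      ∑ i ∈ s, ENNReal.ofReal (lam i) * volume (A i t)
        ≤ volume {y | ENNReal.ofReal t ≤ h' y} := by
    intro t ht
    refine le_trans (bm_many s lam hpos (fun i => A i t)
      (fun i hi => hA_meas i hi t) (fun i hi => hA_ne i hi t ht)) (measure_mono ?_)
    intro z hz
    obtain ⟨x, hx, rfl⟩ := (_root_.mem_finsetSum s _ z).mp hz
    have hrep : ∀ i ∈ s, ∃ y, ENNReal.ofReal t * M i ≤ f i y ∧ x i = lam i * y := by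
      intro i hi
      obtain ⟨y, hy, hxy⟩ := hx i hi
      refine ⟨y, ?_, hxy.symm⟩
      have : ENNReal.ofReal t ≤ f i y * (M i)⁻¹ := hy
      calc ENNReal.ofReal t * M i ≤ f i y * (M i)⁻¹ * M i := mul_le_mul_left this _
        _ = f i y := by
            rw [mul_assoc, ENNReal.inv_mul_cancel (hM_pos i hi).ne' (hbdd i hi), mul_one]
    choose y hy hxy using hrep
    have hz' : ∑ i ∈ s, x i = ∑ i ∈ s.attach, lam i * y i i.2 := by
      rw [← Finset.sum_attach s x]
      exact Finset.sum_congr rfl fun i _ => hxy i i.2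
    show ENNReal.ofReal t ≤ h' (∑ i ∈ s, x i)
    have hcond' := hcond (fun j => if hj : j ∈ s then y j hj else 0)
    have hsums : ∑ i ∈ s, lam i * (if hj : i ∈ s then y i hj else 0) = ∑ i ∈ s, x i := by
      rw [hz', ← Finset.sum_attach s fun i => lam i * (if hj : i ∈ s then y i hj else 0)]
      exact Finset.sum_congr rfl fun i _ => by simp [i.2]
    rw [hsums] at hcond'
    have hlow : ENNReal.ofReal t * C ≤ ∏ i ∈ s, f i (if hj : i ∈ s then y i hj else 0) ^ lam i := by
      have : ∀ i ∈ s, (ENNReal.ofReal t * M i) ^ lam i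
          ≤ f i (if hj : i ∈ s then y i hj else 0) ^ lam i := by
        intro i hi
        simp only [dif_pos hi]
        exact ENNReal.rpow_le_rpow (hy i hi) (hpos i hi).le
      calc ENNReal.ofReal t * C
          = ∏ i ∈ s, (ENNReal.ofReal t * M i) ^ lam i := by
            rw [hC]
            have : ∀ i ∈ s, (ENNReal.ofReal t * M i) ^ lam i
                = ENNReal.ofReal t ^ lam i * M i ^ lam i := fun i hi =>
              ENNReal.mul_rpow_of_nonneg _ _ (hpos i hi).le
            rw [Finset.prod_congr rfl this, Finset.prod_mul_distrib,
              prod_rpow_eq_rpow_sum s lam _ (by simpa using ht.1) ENNReal.ofReal_ne_top,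
              hsum, ENNReal.rpow_one]
        _ ≤ _ := Finset.prod_le_prod' this
    have : ENNReal.ofReal t * C ≤ h (∑ i ∈ s, x i) := hlow.trans hcond'
    calc ENNReal.ofReal t = ENNReal.ofReal t * C * C⁻¹ := by
          rw [mul_assoc, ENNReal.mul_inv_cancel hC_pos.ne' hC_top, mul_one]
      _ ≤ h (∑ i ∈ s, x i) * C⁻¹ := mul_le_mul_left this _
      _ = h' (∑ i ∈ s, x i) := rfl
  -- key 2 : layer cake lower bound for each g i
  have key2 : ∀ i ∈ s, ∫⁻ x, g i x ≤ ∫⁻ t in Ioo (0:ℝ) 1, volume (A i t) := by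
    intro i hi
    set gi' : ℝ → ℝ≥0∞ := fun x => min (g i x) 1 with hgi'
    have h1 : ∫⁻ x, g i x = ∫⁻ x, gi' x := by
      refine lintegral_congr_ae ((hg_le1 i hi).mono fun x hx => ?_)
      simp [hgi', min_eq_left hx]
    set Gi : ℝ → ℝ := fun x => (gi' x).toReal with hGi
    have hGi_nn : 0 ≤ᵐ[volume] Gi := Filter.Eventually.of_forall fun x => ENNReal.toReal_nonneg
    have hGi_meas : AEMeasurable Gi volume :=
      (((hg_meas i hi).min measurable_const).ennreal_toReal).aemeasurable
    have h2 : ∫⁻ x, gi' x = ∫⁻ t in Ioi (0:ℝ), volume {x | t ≤ Gi x} := by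
      rw [← lintegral_eq_lintegral_meas_le volume hGi_nn hGi_meas]
      refine lintegral_congr fun x => ?_
      rw [hGi, ENNReal.ofReal_toReal]
      exact ne_top_of_le_ne_top ENNReal.one_ne_top (min_le_right _ _)
    have h3 : ∫⁻ t in Ioi (0:ℝ), volume {x | t ≤ Gi x}
        = ∫⁻ t in Ioo (0:ℝ) 1, volume {x | t ≤ Gi x} := by
      have hsplit : Ioi (0:ℝ) = Ioo (0:ℝ) 1 ∪ Ici (1:ℝ) := by
        ext u; simp only [mem_Ioi, mem_union, mem_Ioo, mem_Ici]
        constructor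
        · intro hu; by_cases h1 : u < 1
          · exact Or.inl ⟨hu, h1⟩
          · exact Or.inr (not_lt.mp h1)
        · rintro (⟨hu, _⟩ | hu)
          · exact hu
          · linarith
      rw [hsplit, lintegral_union measurableSet_Ici (by
        rw [Set.disjoint_left]; rintro u ⟨_, hu1⟩ hu2; exact absurd hu2 (not_le.mpr hu1))]
      have : ∫⁻ t in Ici (1:ℝ), volume {x | t ≤ Gi x} = 0 := by
        have hae : ∀ᵐ t ∂(volume.restrict (Ici (1:ℝ))), volume {x | t ≤ Gi x} = 0 := by
          rw [ae_restrict_iff' measurableSet_Ici]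
          have h1lt : ∀ᵐ (t:ℝ), t ≠ 1 := by
            refine (ae_iff.mpr ?_)
            simpa using measure_mono_null (fun u hu => by simpa using hu)
              (volume_singleton (a := (1:ℝ)))
          refine h1lt.mono fun t ht ht1 => ?_
          have htgt : 1 < t := lt_of_le_of_ne ht1 (Ne.symm ht)
          have : {x | t ≤ Gi x} = ∅ := by
            ext x
            simp only [mem_setOf_eq, mem_empty_iff_false, iff_false, not_le]
            calc Gi x ≤ 1 := by
                  rw [hGi]
                  refine ENNReal.toReal_le_of_le_ofReal zero_le_one ?_
                  rw [ENNReal.ofReal_one]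
                  exact min_le_right (g i x) 1
              _ < t := htgt
          rw [this, measure_empty]
        simp [lintegral_congr_ae hae]
      rw [this, add_zero]
    rw [h1, h2, h3]
    refine lintegral_mono_ae (ae_restrict_mem measurableSet_Ioo |>.mono fun t ht => ?_)
    refine measure_mono fun x hx => ?_
    have : ENNReal.ofReal t ≤ gi' x := ENNReal.ofReal_le_of_le_toReal hx
    exact le_trans this (min_le_left _ _)
  -- key 3 : layer cake upper bound for h'
  have key3 : ∫⁻ t in Ioo (0:ℝ) 1, volume {y | ENNReal.ofReal t ≤ h' y} ≤ ∫⁻ y, h' y := by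
    set H' : ℝ → ℝ≥0∞ := fun y => min (h' y) 1 with hH'
    set Hr : ℝ → ℝ := fun y => (H' y).toReal with hHr
    have hH_meas : Measurable H' := (hh.mul_const _).min measurable_const
    have h2 : ∫⁻ y, H' y = ∫⁻ t in Ioi (0:ℝ), volume {y | t ≤ Hr y} := by
      rw [← lintegral_eq_lintegral_meas_le volume
        (Filter.Eventually.of_forall fun y => ENNReal.toReal_nonneg)
        hH_meas.ennreal_toReal.aemeasurable]
      refine lintegral_congr fun y => ?_
      exact (ENNReal.ofReal_toReal
        (ne_top_of_le_ne_top ENNReal.one_ne_top (min_le_right _ _))).symm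
    calc ∫⁻ t in Ioo (0:ℝ) 1, volume {y | ENNReal.ofReal t ≤ h' y}
        ≤ ∫⁻ t in Ioo (0:ℝ) 1, volume {y | t ≤ Hr y} := by
          refine lintegral_mono_ae (ae_restrict_mem measurableSet_Ioo |>.mono fun t ht => ?_)
          refine measure_mono fun y hy => ?_
          have h4 : ENNReal.ofReal t ≤ H' y := by
            refine le_min hy ?_
            exact le_of_lt (ENNReal.ofReal_lt_one.mpr ht.2)
          show t ≤ Hr y
          rw [hHr, ← ENNReal.toReal_ofReal ht.1.le]
          exact ENNReal.toReal_mono (ne_top_of_le_ne_top ENNReal.one_ne_top (min_le_right _ _)) h4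
      _ ≤ ∫⁻ t in Ioi (0:ℝ), volume {y | t ≤ Hr y} :=
          lintegral_mono_set (fun t ht => ht.1)
      _ = ∫⁻ y, H' y := h2.symm
      _ ≤ ∫⁻ y, h' y := lintegral_mono fun y => min_le_left _ _
  -- combine
  have hmain : ∑ i ∈ s, ENNReal.ofReal (lam i) * ∫⁻ x, g i x ≤ ∫⁻ y, h' y := by
    calc ∑ i ∈ s, ENNReal.ofReal (lam i) * ∫⁻ x, g i x
        ≤ ∑ i ∈ s, ENNReal.ofReal (lam i) * ∫⁻ t in Ioo (0:ℝ) 1, volume (A i t) :=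
          Finset.sum_le_sum fun i hi => mul_le_mul_right (key2 i hi) _
      _ = ∫⁻ t in Ioo (0:ℝ) 1, ∑ i ∈ s, ENNReal.ofReal (lam i) * volume (A i t) := by
          have hmeasA : ∀ i, Measurable fun t : ℝ => volume (A i t) := fun i =>
            Antitone.measurable fun t₁ t₂ h12 => measure_mono fun x hx =>
              le_trans (ENNReal.ofReal_le_ofReal h12) hx
          rw [lintegral_finset_sum _ fun i _ => (hmeasA i).const_mul _]
          exact Finset.sum_congr rfl fun i hi => (lintegral_const_mul _ (hmeasA i)).symm
      _ ≤ ∫⁻ t in Ioo (0:ℝ) 1, volume {y | ENNReal.ofReal t ≤ h' y} :=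
          lintegral_mono_ae (ae_restrict_mem measurableSet_Ioo |>.mono fun t ht => key1 t ht)
      _ ≤ ∫⁻ y, h' y := key3
  -- final assembly
  calc ∏ i ∈ s, (∫⁻ x, f i x) ^ lam i
      = ∏ i ∈ s, (M i * ∫⁻ x, g i x) ^ lam i := by
        refine Finset.prod_congr rfl fun i hi => ?_
        rw [hg_lint i hi, mul_comm (M i), mul_assoc,
          ENNReal.inv_mul_cancel (hM_pos i hi).ne' (hbdd i hi), mul_one]
    _ = C * ∏ i ∈ s, (∫⁻ x, g i x) ^ lam i := by
        rw [hC, ← Finset.prod_mul_distrib]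
        exact Finset.prod_congr rfl fun i hi => ENNReal.mul_rpow_of_nonneg _ _ (hpos i hi).le
    _ ≤ C * ∑ i ∈ s, ENNReal.ofReal (lam i) * ∫⁻ x, g i x :=
        mul_le_mul_right (ennreal_am_gm s lam (fun i hi => (hpos i hi).le) hsum _
          fun i hi => hg_fin i hi) _
    _ ≤ C * ∫⁻ y, h' y := mul_le_mul_right hmain _
    _ = ∫⁻ y, h y := by
        rw [hh']
        rw [lintegral_mul_const _ hh, ← mul_comm, mul_assoc,
          ENNReal.inv_mul_cancel hC_pos.ne' hC_top, mul_one]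

lemma PL1_pos {ι : Type*} (s : Finset ι) (lam : ι → ℝ) (hpos : ∀ i ∈ s, 0 < lam i)
    (hsum : ∑ i ∈ s, lam i = 1)
    (f : ι → ℝ → ℝ≥0∞) (hf : ∀ i ∈ s, Measurable (f i))
    (h : ℝ → ℝ≥0∞) (hh : Measurable h)
    (hcond : ∀ x : ι → ℝ, ∏ i ∈ s, f i (x i) ^ lam i ≤ h (∑ i ∈ s, lam i * x i)) :
    ∏ i ∈ s, (∫⁻ x, f i x) ^ lam i ≤ ∫⁻ x, h x := by
  classical
  by_cases hzero : ∃ i ∈ s, ∫⁻ x, f i x = 0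
  · obtain ⟨i, hi, h0⟩ := hzero
    have : (∫⁻ x, f i x) ^ lam i = 0 := by
      rw [h0]; exact ENNReal.zero_rpow_of_pos (hpos i hi)
    rw [Finset.prod_eq_zero hi this]
    exact zero_le
  push_neg at hzero
  -- truncations
  set cap : ℕ → ℝ → ℝ≥0∞ := fun N x => (Icc (-(N:ℝ)) N).indicator (fun _ => (N : ℝ≥0∞)) x
    with hcap
  have hcap_meas : ∀ N, Measurable (cap N) := fun N =>
    measurable_const.indicator measurableSet_Icc
  have hcap_mono : ∀ x, Monotone fun N => cap N x := by
    intro x N M hNM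
    by_cases hx : x ∈ Icc (-(N:ℝ)) N
    · have hx' : x ∈ Icc (-(M:ℝ)) M := by
        obtain ⟨h1, h2⟩ := hx
        constructor
        · refine le_trans ?_ h1
          simp only [neg_le_neg_iff]
          exact_mod_cast hNM
        · exact h2.trans (by exact_mod_cast hNM)
      rw [hcap]
      simp only [Set.indicator_of_mem hx, Set.indicator_of_mem hx']
      exact_mod_cast hNM
    · rw [hcap]
      simp [Set.indicator_of_notMem hx]
  have hcap_le : ∀ N x, cap N x ≤ N := by
    intro N x
    by_cases hx : x ∈ Icc (-(N:ℝ)) N <;> simp [hcap, hx]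
  set fc : ℕ → ι → ℝ → ℝ≥0∞ := fun N i x => min (f i x) (cap N x) with hfc
  have hfc_meas : ∀ N, ∀ i ∈ s, Measurable (fc N i) := fun N i hi =>
    (hf i hi).min (hcap_meas N)
  have hfc_mono : ∀ i, Monotone fun N => fc N i := by
    intro i N M hNM x
    exact min_le_min le_rfl (hcap_mono x hNM)
  have hfc_sup : ∀ i x, (⨆ N, fc N i x) = f i x := by
    intro i x
    obtain ⟨N₀, hN₀⟩ := exists_nat_ge |x|
    have hmem : ∀ N : ℕ, N₀ ≤ N → x ∈ Icc (-(N:ℝ)) N := by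
      intro N hN
      have habs : |x| ≤ (N:ℝ) := hN₀.trans (by exact_mod_cast hN)
      exact ⟨neg_le_of_abs_le habs, le_of_abs_le habs⟩
    refine le_antisymm (iSup_le fun N => min_le_left _ _) ?_
    rcases eq_or_ne (f i x) ⊤ with htop | hne
    · rw [htop]
      refine le_trans (le_of_eq ENNReal.iSup_natCast.symm) (iSup_le fun n => ?_)
      refine le_iSup_of_le (max N₀ n) ?_
      have hx : x ∈ Icc (-((max N₀ n : ℕ):ℝ)) ((max N₀ n : ℕ):ℝ) :=
        hmem _ (le_max_left _ _)
      simp only [hfc, htop, hcap, Set.indicator_of_mem hx, le_inf_iff, le_top, true_and]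
      exact_mod_cast le_max_right N₀ n
    · obtain ⟨n, hn⟩ := ENNReal.exists_nat_gt hne
      refine le_iSup_of_le (max N₀ n) (le_of_eq ?_)
      have hx : x ∈ Icc (-((max N₀ n : ℕ):ℝ)) ((max N₀ n : ℕ):ℝ) := hmem _ (le_max_left _ _)
      rw [hfc]
      simp only [hcap, Set.indicator_of_mem hx]
      rw [min_eq_left]
      refine le_trans hn.le ?_
      exact_mod_cast le_max_right N₀ n
  have hfc_lint_sup : ∀ i ∈ s, (⨆ N, ∫⁻ x, fc N i x) = ∫⁻ x, f i x := by
    intro i hi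
    rw [← lintegral_iSup (fun N => hfc_meas N i hi) (fun N M hNM => hfc_mono i hNM)]
    exact lintegral_congr fun x => hfc_sup i x
  have hfc_fin : ∀ N, ∀ i ∈ s, ∫⁻ x, fc N i x ≠ ⊤ := by
    intro N i hi
    have : ∫⁻ x, fc N i x ≤ ∫⁻ x, cap N x := lintegral_mono fun x => min_le_right _ _
    refine ne_top_of_le_ne_top ?_ this
    rw [hcap, lintegral_indicator_const measurableSet_Icc]
    rw [Real.volume_Icc]
    exact ENNReal.mul_ne_top (ENNReal.natCast_ne_top N) ENNReal.ofReal_ne_top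
  have hfc_bdd : ∀ N, ∀ i ∈ s, essSup (fc N i) volume ≠ ⊤ := by
    intro N i hi
    refine ne_top_of_le_ne_top (ENNReal.natCast_ne_top N)
      (essSup_le_of_ae_le _ (Filter.Eventually.of_forall fun x => ?_))
    exact le_trans (min_le_right _ _) (hcap_le N x)
  have hfc_cond : ∀ N, ∀ x : ι → ℝ,
      ∏ i ∈ s, fc N i (x i) ^ lam i ≤ h (∑ i ∈ s, lam i * x i) := by
    intro N x
    refine le_trans (Finset.prod_le_prod' fun i hi => ?_) (hcond x)
    exact ENNReal.rpow_le_rpow (min_le_left _ _) (hpos i hi).le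
  -- choose N₀ making all truncated integrals positive
  have hexN : ∀ i ∈ s, ∃ N, 0 < ∫⁻ x, fc N i x := by
    intro i hi
    by_contra hcon
    push_neg at hcon
    simp only [nonpos_iff_eq_zero] at hcon
    refine hzero i hi ?_
    rw [← hfc_lint_sup i hi]
    simp [hcon]
  choose Nf hNf using hexN
  set N₀ : ℕ := s.attach.sup fun i => Nf i i.2 with hN₀def
  have hposN : ∀ n : ℕ, ∀ i ∈ s, 0 < ∫⁻ x, fc (N₀ + n) i x := by
    intro n i hi
    refine lt_of_lt_of_le (hNf i hi) (lintegral_mono fun x => ?_)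
    refine hfc_mono i ?_ x
    calc Nf i hi ≤ N₀ :=
          Finset.le_sup (f := fun j : {x // x ∈ s} => Nf j.1 j.2) (Finset.mem_attach s ⟨i, hi⟩)
      _ ≤ N₀ + n := Nat.le_add_right _ _
  -- apply the nice case at each truncation level
  have happ : ∀ n : ℕ, ∏ i ∈ s, (∫⁻ x, fc (N₀ + n) i x) ^ lam i ≤ ∫⁻ x, h x := fun n =>
    PL1_nice s lam hpos hsum (fc (N₀ + n)) (hfc_meas _) h hh (hfc_fin _) (hposN n)
      (hfc_bdd _) (hfc_cond _)
  -- pass to the limit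
  have hswap : ∏ i ∈ s, (∫⁻ x, f i x) ^ lam i
      = ⨆ n, ∏ i ∈ s, (∫⁻ x, fc (N₀ + n) i x) ^ lam i := by
    rw [← iSup_finset_prod_monotone s (fun i n => (∫⁻ x, fc (N₀ + n) i x) ^ lam i)
      (fun i hi n m hnm => ENNReal.rpow_le_rpow
        (lintegral_mono fun x => hfc_mono i (by omega) x) (hpos i hi).le)]
    refine Finset.prod_congr rfl fun i hi => ?_
    have h1 : (⨆ n, ∫⁻ x, fc (N₀ + n) i x) = ∫⁻ x, f i x := by
      rw [← hfc_lint_sup i hi]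
      apply le_antisymm
      · exact iSup_le fun n => le_iSup (fun N => ∫⁻ x, fc N i x) (N₀ + n)
      · refine iSup_le fun N => le_iSup_of_le N (lintegral_mono fun x => ?_)
        exact hfc_mono i (by omega) x
    rw [← h1]
    refine (Monotone.map_iSup_of_continuousAt
      (f := fun z : ℝ≥0∞ => z ^ lam i) (g := fun n => ∫⁻ x, fc (N₀ + n) i x) ?_ ?_ ?_)
    · exact ENNReal.continuous_rpow_const.continuousAt
    · exact fun a b hab => ENNReal.rpow_le_rpow hab (hpos i hi).le
    · show (⊥ : ℝ≥0∞) ^ lam i = ⊥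
      simpa using ENNReal.zero_rpow_of_pos (hpos i hi)
  rw [hswap]
  exact iSup_le happ

def PLSpace (α : Type*) [MeasurableSpace α] [AddCommMonoid α] [Module ℝ α]
    (μ : Measure α) : Prop :=
  ∀ (k : ℕ) (lam : Fin k → ℝ), (∀ i, 0 ≤ lam i) → (∑ i, lam i) = 1 →
  ∀ (f : Fin k → α → ℝ≥0∞), (∀ i, Measurable (f i)) →
  ∀ (h : α → ℝ≥0∞), Measurable h →
  (∀ x : Fin k → α, ∏ i, f i (x i) ^ lam i ≤ h (∑ i, lam i • x i)) →
  ∏ i, (∫⁻ x, f i x ∂μ) ^ lam i ≤ ∫⁻ x, h x ∂μ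

lemma PL_real : PLSpace ℝ volume := by
  classical
  intro k lam hlam hsum f hf h hh hcond
  set s : Finset (Fin k) := Finset.univ.filter fun i => lam i ≠ 0 with hs
  have hpos : ∀ i ∈ s, 0 < lam i := by
    intro i hi
    rw [hs, Finset.mem_filter] at hi
    exact lt_of_le_of_ne (hlam i) (Ne.symm hi.2)
  have hsum' : ∑ i ∈ s, lam i = 1 := by
    rw [hs, Finset.sum_filter_ne_zero, hsum]
  have hprod_eq : ∀ (g : Fin k → ℝ≥0∞), ∏ i ∈ s, g i ^ lam i = ∏ i, g i ^ lam i := by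
    intro g
    refine Finset.prod_subset (Finset.subset_univ s) fun i _ hni => ?_
    have : lam i = 0 := by
      by_contra hne
      exact hni (by rw [hs, Finset.mem_filter]; exact ⟨Finset.mem_univ i, hne⟩)
    rw [this, ENNReal.rpow_zero]
  have hcond' : ∀ x : Fin k → ℝ, ∏ i ∈ s, f i (x i) ^ lam i ≤ h (∑ i ∈ s, lam i * x i) := by
    intro x
    have hsum_eq : ∑ i ∈ s, lam i * x i = ∑ i, lam i • x i := by
      refine Finset.sum_subset (Finset.subset_univ s) fun i _ hni => ?_
      have : lam i = 0 := by
        by_contra hne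
        exact hni (by rw [hs, Finset.mem_filter]; exact ⟨Finset.mem_univ i, hne⟩)
      simp [this]
    rw [hprod_eq, hsum_eq]
    exact hcond x
  have := PL1_pos s lam hpos hsum' f (fun i _ => hf i) h hh hcond'
  rwa [hprod_eq] at this

lemma PL_unique {α : Type*} [MeasurableSpace α] [AddCommMonoid α] [Module ℝ α] [Unique α]
    (μ : Measure α) (hμ : μ Set.univ = 1) : PLSpace α μ := by
  intro k lam hlam hsum f hf h hh hcond
  have hlint : ∀ g : α → ℝ≥0∞, ∫⁻ x, g x ∂μ = g default := by
    intro g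
    rw [lintegral_unique, hμ, mul_one]
  simp only [hlint]
  have := hcond fun _ => default
  rw [show (∑ i, lam i • (default : α)) = default from Subsingleton.elim _ _] at this
  exact this

lemma PL_prod {α β : Type*} [MeasurableSpace α] [MeasurableSpace β]
    [AddCommMonoid α] [Module ℝ α] [AddCommMonoid β] [Module ℝ β]
    (μ : Measure α) (ν : Measure β) [SFinite μ] [SFinite ν]
    (hα : PLSpace α μ) (hβ : PLSpace β ν) : PLSpace (α × β) (μ.prod ν) := by
  intro k lam hlam hsum f hf h hh hcond
  set φ : Fin k → β → ℝ≥0∞ := fun i y => ∫⁻ x, f i (x, y) ∂μ with hφ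
  set ψ : β → ℝ≥0∞ := fun y => ∫⁻ x, h (x, y) ∂μ with hψ
  have hφ_meas : ∀ i, Measurable (φ i) := fun i => (hf i).lintegral_prod_left'
  have hψ_meas : Measurable ψ := hh.lintegral_prod_left'
  have hcondβ : ∀ y : Fin k → β, ∏ i, φ i (y i) ^ lam i ≤ ψ (∑ i, lam i • y i) := by
    intro y
    refine hα k lam hlam hsum (fun i x => f i (x, y i))
      (fun i => (hf i).comp (measurable_prodMk_right)) (fun x => h (x, ∑ i, lam i • y i))
      (hh.comp measurable_prodMk_right) ?_
    intro x
    have := hcond fun i => (x i, y i)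
    rwa [show (∑ i, lam i • (x i, y i)) = (∑ i, lam i • x i, ∑ i, lam i • y i) from
      (Finset.sum_congr rfl fun i _ => Prod.smul_mk _ _ _).trans (prod_mk_sum _ _ _).symm]
      at this
  have key := hβ k lam hlam hsum φ hφ_meas ψ hψ_meas hcondβ
  have hfint : ∀ i, ∫⁻ y, φ i y ∂ν = ∫⁻ z, f i z ∂(μ.prod ν) := fun i =>
    (lintegral_prod_symm (f i) (hf i).aemeasurable).symm
  have hhint : ∫⁻ y, ψ y ∂ν = ∫⁻ z, h z ∂(μ.prod ν) :=
    (lintegral_prod_symm h hh.aemeasurable).symm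
  rw [← hhint]
  refine le_trans (le_of_eq ?_) key
  exact Finset.prod_congr rfl fun i _ => by rw [hfint i]

lemma PL_map {α β : Type*} [MeasurableSpace α] [MeasurableSpace β]
    [AddCommMonoid α] [Module ℝ α] [AddCommMonoid β] [Module ℝ β]
    (μ : Measure α) (ν : Measure β) (e : α ≃ᵐ β) (he : MeasurePreserving e μ ν)
    (hlin : ∀ (k : ℕ) (c : Fin k → ℝ) (x : Fin k → α),
      e (∑ i, c i • x i) = ∑ i, c i • e (x i))
    (hα : PLSpace α μ) : PLSpace β ν := by
  intro k lam hlam hsum f hf h hh hcond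
  have key := hα k lam hlam hsum (fun i x => f i (e x))
    (fun i => (hf i).comp e.measurable) (fun x => h (e x)) (hh.comp e.measurable) ?_
  · have h1 : ∀ i, ∫⁻ x, f i (e x) ∂μ = ∫⁻ y, f i y ∂ν := fun i => he.lintegral_comp (hf i)
    have h2 : ∫⁻ x, h (e x) ∂μ = ∫⁻ y, h y ∂ν := he.lintegral_comp hh
    rw [← h2]
    refine le_trans (le_of_eq ?_) key
    exact Finset.prod_congr rfl fun i _ => by rw [h1 i]
  · intro x
    show ∏ i, f i (e (x i)) ^ lam i ≤ h (e (∑ i, lam i • x i))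
    rw [hlin k lam x]
    exact hcond fun i => e (x i)

lemma PLn : ∀ n : ℕ, PLSpace (Fin n → ℝ) volume := by
  intro n
  induction n with
  | zero =>
    refine PL_unique _ ?_
    rw [MeasureTheory.volume_pi, Measure.pi_univ]
    simp
  | succ n ih =>
    set e := MeasurableEquiv.piFinSuccAbove (fun _ : Fin (n + 1) => ℝ) 0 with hedef
    have hmp : MeasurePreserving e volume ((volume : Measure ℝ).prod (volume : Measure (Fin n → ℝ))) :=
      measurePreserving_piFinSuccAbove (fun _ : Fin (n + 1) => (volume : Measure ℝ)) 0
    have he_lin : ∀ (k : ℕ) (c : Fin k → ℝ) (w : Fin k → (Fin (n + 1) → ℝ)),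
        e (∑ i, c i • w i) = ∑ i, c i • e (w i) := by
      intro k c w
      rw [← prod_mk_sum]
      simp only [hedef, MeasurableEquiv.piFinSuccAbove_apply]
      refine Prod.ext ?_ ?_
      · simp [Finset.sum_apply, Prod.smul_mk]
      · simp only [Prod.smul_mk, Prod.snd]
        funext j
        simp [Fin.removeNth, Fin.tail, Finset.sum_apply]
    exact PL_map _ _ e.symm (hmp.symm e)
      (by
        intro k c x
        apply e.injective
        rw [e.apply_symm_apply, he_lin]
        exact Finset.sum_congr rfl fun i _ => by rw [e.apply_symm_apply])
      (PL_prod _ _ PL_real ih)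


lemma PL_euclidean (n : ℕ) : PLSpace (EuclideanSpace ℝ (Fin n)) volume :=
  PL_map volume volume (MeasurableEquiv.toLp 2 (Fin n → ℝ))
    ((EuclideanSpace.volume_preserving_symm_measurableEquiv_toLp (Fin n)).symm
      (MeasurableEquiv.toLp 2 (Fin n → ℝ)).symm)
    (fun k c x => by simp [MeasurableEquiv.coe_toLp]) (PLn n)

-- measurable ENNReal minorant / majorant
lemma exists_meas_minorant {E : Type*} [MeasurableSpace E] (μ : Measure E)
    (f : E → ℝ) (hf_nonneg : ∀ x, 0 ≤ f x) (hf : AEMeasurable f μ) :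
    ∃ F : E → ℝ≥0∞, Measurable F ∧ (∀ x, F x ≤ ENNReal.ofReal (f x)) ∧
      F =ᵐ[μ] fun x => ENNReal.ofReal (f x) := by
  classical
  set N := toMeasurable μ {x | f x ≠ hf.mk f x} with hNdef
  have hNmeas : MeasurableSet N := measurableSet_toMeasurable _ _
  have hNnull : μ N = 0 := by
    rw [hNdef, measure_toMeasurable]
    exact ae_iff.mp hf.ae_eq_mk
  refine ⟨fun x => if x ∈ N then 0 else ENNReal.ofReal (f x), ?_, ?_, ?_⟩
  · have heq : (fun x => if x ∈ N then 0 else ENNReal.ofReal (f x))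
        = fun x => if x ∈ N then 0 else ENNReal.ofReal (hf.mk f x) := by
      funext x
      by_cases hx : x ∈ N
      · simp [hx]
      · have : f x = hf.mk f x := by
          by_contra hne
          exact hx (subset_toMeasurable _ _ hne)
        simp [hx, this]
    rw [heq]
    exact Measurable.ite hNmeas measurable_const (ENNReal.measurable_ofReal.comp hf.measurable_mk)
  · intro x
    by_cases hx : x ∈ N <;> simp [hx]
  · have : ∀ᵐ x ∂μ, x ∉ N := by
      rw [ae_iff]
      simpa using hNnull
    exact this.mono fun x hx => by simp [hx]

lemma exists_meas_majorant {E : Type*} [MeasurableSpace E] (μ : Measure E)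
    (h : E → ℝ) (hh : AEMeasurable h μ) :
    ∃ H : E → ℝ≥0∞, Measurable H ∧ (∀ x, ENNReal.ofReal (h x) ≤ H x) ∧
      H =ᵐ[μ] fun x => ENNReal.ofReal (h x) := by
  classical
  set N := toMeasurable μ {x | h x ≠ hh.mk h x} with hNdef
  have hNmeas : MeasurableSet N := measurableSet_toMeasurable _ _
  have hNnull : μ N = 0 := by
    rw [hNdef, measure_toMeasurable]
    exact ae_iff.mp hh.ae_eq_mk
  refine ⟨fun x => if x ∈ N then ⊤ else ENNReal.ofReal (h x), ?_, ?_, ?_⟩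
  · have heq : (fun x => if x ∈ N then ⊤ else ENNReal.ofReal (h x))
        = fun x => if x ∈ N then ⊤ else ENNReal.ofReal (hh.mk h x) := by
      funext x
      by_cases hx : x ∈ N
      · simp [hx]
      · have : h x = hh.mk h x := by
          by_contra hne
          exact hx (subset_toMeasurable _ _ hne)
        simp [hx, this]
    rw [heq]
    exact Measurable.ite hNmeas measurable_const (ENNReal.measurable_ofReal.comp hh.measurable_mk)
  · intro x
    by_cases hx : x ∈ N <;> simp [hx]
  · have : ∀ᵐ x ∂μ, x ∉ N := by
      rw [ae_iff]
      simpa using hNnull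
    exact this.mono fun x hx => by simp [hx]

/-- The Prékopa–Leindler inequality for `k` functions: if `f_1, …, f_k, h` are nonnegative
integrable functions on `ℝ^n`, `λ_i ≥ 0` with `∑ λ_i = 1`, and
`h(∑ λ_i x_i) ≥ ∏ f_i(x_i)^{λ_i}` for all `x_1, …, x_k`, then
`∏ (∫ f_i)^{λ_i} ≤ ∫ h`. -/
theorem prekopa_leindler_many (n k : ℕ)
    (f : Fin k → EuclideanSpace ℝ (Fin n) → ℝ)
    (h : EuclideanSpace ℝ (Fin n) → ℝ)
    (hf_nonneg : ∀ i x, 0 ≤ f i x)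
    (hf_int : ∀ i, Integrable (f i))
    (hh_nonneg : ∀ x, 0 ≤ h x)
    (hh_int : Integrable h)
    (lam : Fin k → ℝ)
    (hlam_nonneg : ∀ i, 0 ≤ lam i)
    (hlam_sum : ∑ i : Fin k, lam i = 1)
    (hcond : ∀ x : Fin k → EuclideanSpace ℝ (Fin n),
      ∏ i : Fin k, (f i (x i)) ^ (lam i) ≤ h (∑ i : Fin k, lam i • x i)) :
    ∏ i : Fin k, (∫ x : EuclideanSpace ℝ (Fin n), f i x) ^ (lam i)
      ≤ ∫ x : EuclideanSpace ℝ (Fin n), h x := by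
  classical
  have hFex : ∀ i : Fin k, ∃ F : EuclideanSpace ℝ (Fin n) → ℝ≥0∞, Measurable F ∧
      (∀ x, F x ≤ ENNReal.ofReal (f i x)) ∧ F =ᵐ[volume] fun x => ENNReal.ofReal (f i x) :=
    fun i => exists_meas_minorant volume (f i) (hf_nonneg i) (hf_int i).1.aemeasurable
  choose F hF_meas hF_le hF_ae using hFex
  obtain ⟨H, hH_meas, hH_ge, hH_ae⟩ :=
    exists_meas_majorant volume h hh_int.1.aemeasurable
  have hcond' : ∀ x : Fin k → EuclideanSpace ℝ (Fin n),
      ∏ i, F i (x i) ^ lam i ≤ H (∑ i, lam i • x i) := by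
    intro x
    calc ∏ i, F i (x i) ^ lam i
        ≤ ∏ i, ENNReal.ofReal (f i (x i)) ^ lam i :=
          Finset.prod_le_prod' fun i _ => ENNReal.rpow_le_rpow (hF_le i (x i)) (hlam_nonneg i)
      _ = ENNReal.ofReal (∏ i, f i (x i) ^ lam i) := by
          rw [ofReal_finset_prod _ _ fun i _ => Real.rpow_nonneg (hf_nonneg i (x i)) _]
          exact Finset.prod_congr rfl fun i _ =>
            ENNReal.ofReal_rpow_of_nonneg (hf_nonneg i (x i)) (hlam_nonneg i)
      _ ≤ ENNReal.ofReal (h (∑ i, lam i • x i)) := ENNReal.ofReal_le_ofReal (hcond x)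
      _ ≤ H (∑ i, lam i • x i) := hH_ge _
  have key := PL_euclidean n k lam hlam_nonneg hlam_sum F hF_meas H hH_meas hcond'
  have hFint : ∀ i, ∫⁻ x, F i x = ENNReal.ofReal (∫ x, f i x) := by
    intro i
    rw [lintegral_congr_ae (hF_ae i),
      ← ofReal_integral_eq_lintegral_ofReal (hf_int i)
        (Filter.Eventually.of_forall (hf_nonneg i))]
  have hHint : ∫⁻ x, H x = ENNReal.ofReal (∫ x, h x) := by
    rw [lintegral_congr_ae hH_ae,
      ← ofReal_integral_eq_lintegral_ofReal hh_int (Filter.Eventually.of_forall hh_nonneg)]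
  rw [hHint] at key
  have hLHS : ∏ i, (∫⁻ x, F i x) ^ lam i
      = ENNReal.ofReal (∏ i, (∫ x, f i x) ^ lam i) := by
    rw [ofReal_finset_prod _ _ fun i _ =>
      Real.rpow_nonneg (integral_nonneg (hf_nonneg i)) _]
    refine Finset.prod_congr rfl fun i _ => ?_
    rw [hFint i, ENNReal.ofReal_rpow_of_nonneg (integral_nonneg (hf_nonneg i)) (hlam_nonneg i)]
  rw [hLHS] at key
  exact (ENNReal.ofReal_le_ofReal_iff (integral_nonneg hh_nonneg)).mp key
end

section
/- (Monotonicity of the multimarginal Blaschke–Santaló functional) Let k ≥ 2, C > 0, λ_1, …, λ_k ∈ (0,1) with ∑_{i=1}^k λ_i = 1, and let V_1, …, V_k : ℝ^n → ℝ be measurable functions with e^{−V_i} integrable and 0 < ∫ e^{−V_i} dx, satisfying ∑_{i=1}^k λ_i V_i(x_i) ≥ C ∑_{1 ≤ i < j ≤ k} λ_i λ_j ⟨x_i, x_j⟩ for all x_1, …, x_k ∈ ℝ^n. Let U_1, …, U_k : ℝ^n → ℝ be measurable functions with e^{−U_i} integrable, satisfying ∑_{i=1}^k λ_i U_i(x_i)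 ≥ C ∑_{1 ≤ i < j ≤ k} λ_i λ_j ⟨x_i, x_j⟩ for all x_1, …, x_k ∈ ℝ^n, and suppose there exist a nonnegative function ρ with ρ·dx a probability measure and convex functions Φ_i : ℝ^n → ℝ such that for each i the (almost everywhere defined) gradient map ∇Φ_i pushes ρ·dx forward onto (e^{−V_i}/∫ e^{−V_i} dx)·dx, and for ρ·dx-almost every y, ∑_{i=1}^k λ_i U_i(∇Φ_i(y)) = C ∑_{1 ≤ i < j ≤ k} λ_i λ_j ⟨∇Φ_i(y), ∇Φ_j(y)⟩ (this holds when ρ·dx is the Wasserstein barycenter of the measures (e^{−V_i}/∫ e^{−V_i} dx)·dx with weights λ_i, ∇Φ_i are the optimal transport maps, and (λ_i U_i) solves the dual multimarginal Kantorovich problem with cost C ∑_{i<j} λ_i λ_j ⟨x_i, x_j⟩). Then ∏_{i=1}^k (∫ e^{−V_i} dx_i)^{λ_i} ≤ ∏_{i=1}^k (∫ e^{−U_i} dx_i)^{λ_i}. -/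
open MeasureTheory Real

/-- The weighted sum `∑_{1 ≤ i < j ≤ k} λ_i λ_j ⟨x_i, x_j⟩`. -/
noncomputable def wPairSum {n k : ℕ} (lam : Fin k → ℝ)
    (x : Fin k → EuclideanSpace ℝ (Fin n)) : ℝ :=
  ∑ i : Fin k, ∑ j : Fin k,
    if i < j then lam i * lam j * (inner ℝ (x i) (x j) : ℝ) else 0

/-- Monotonicity of the multimarginal Blaschke–Santaló functional: with `(λ_i U_i)` a
solution of the dual multimarginal Kantorovich problem for the marginals
`(e^{-V_i}/∫e^{-V_i})·dx` and cost `C ∑_{i<j} λ_i λ_j ⟨x_i, x_j⟩` (expressed via a barycenter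
measure `ρ·dx` and transport potentials `Φ_i`), one has
`∏ (∫ e^{-V_i})^{λ_i} ≤ ∏ (∫ e^{-U_i})^{λ_i}`. -/
theorem BS_monotone_multimarginal (n k : ℕ) (hk : 2 ≤ k) (C : ℝ) (hC : 0 < C)
    (lam : Fin k → ℝ)
    (hlam : ∀ i, lam i ∈ Set.Ioo (0 : ℝ) 1)
    (hlam_sum : ∑ i : Fin k, lam i = 1)
    (V U : Fin k → EuclideanSpace ℝ (Fin n) → ℝ)
    (hV_meas : ∀ i, Measurable (V i))
    (hV_int : ∀ i, Integrable (fun x : EuclideanSpace ℝ (Fin n) => Real.exp (-(V i x))))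
    (hV_pos : ∀ i, 0 < ∫ x : EuclideanSpace ℝ (Fin n), Real.exp (-(V i x)))
    (hV_cond : ∀ x : Fin k → EuclideanSpace ℝ (Fin n),
      C * wPairSum lam x ≤ ∑ i : Fin k, lam i * V i (x i))
    (hU_meas : ∀ i, Measurable (U i))
    (hU_int : ∀ i, Integrable (fun x : EuclideanSpace ℝ (Fin n) => Real.exp (-(U i x))))
    (hU_cond : ∀ x : Fin k → EuclideanSpace ℝ (Fin n),
      C * wPairSum lam x ≤ ∑ i : Fin k, lam i * U i (x i))
    (ρ : EuclideanSpace ℝ (Fin n) → ℝ)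
    (hρ_nonneg : ∀ x, 0 ≤ ρ x)
    (hρ_prob : IsProbabilityMeasure
      (volume.withDensity fun x : EuclideanSpace ℝ (Fin n) => ENNReal.ofReal (ρ x)))
    (Φ : Fin k → EuclideanSpace ℝ (Fin n) → ℝ)
    (hΦ_conv : ∀ i, ConvexOn ℝ Set.univ (Φ i))
    (hΦ_push : ∀ i,
      Measure.map (fun x => gradient (Φ i) x)
          (volume.withDensity fun x : EuclideanSpace ℝ (Fin n) => ENNReal.ofReal (ρ x))
        = volume.withDensity fun x : EuclideanSpace ℝ (Fin n) =>
            ENNReal.ofReal (Real.exp (-(V i x)) /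
              ∫ z : EuclideanSpace ℝ (Fin n), Real.exp (-(V i z))))
    (hU_dual : ∀ᵐ y ∂(volume.withDensity fun x : EuclideanSpace ℝ (Fin n) =>
        ENNReal.ofReal (ρ x)),
      ∑ i : Fin k, lam i * U i (gradient (Φ i) y)
        = C * wPairSum lam (fun i => gradient (Φ i) y)) :
    ∏ i : Fin k, (∫ x : EuclideanSpace ℝ (Fin n), Real.exp (-(V i x))) ^ (lam i)
      ≤ ∏ i : Fin k, (∫ x : EuclideanSpace ℝ (Fin n), Real.exp (-(U i x))) ^ (lam i) := by
  classical
  haveI := hρ_prob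
  set μ : Measure (EuclideanSpace ℝ (Fin n)) := volume.withDensity fun x => ENNReal.ofReal (ρ x) with hμ
  set g : Fin k → EuclideanSpace ℝ (Fin n) → EuclideanSpace ℝ (Fin n) := fun i y => gradient (Φ i) y with hg
  set Z : Fin k → ℝ := fun i => ∫ x : EuclideanSpace ℝ (Fin n), Real.exp (-(V i x)) with hZ
  set J : Fin k → ℝ := fun i => ∫ x : EuclideanSpace ℝ (Fin n), Real.exp (-(U i x)) with hJ
  have hlam0 : ∀ i, (0:ℝ) ≤ lam i := fun i => (hlam i).1.le
  -- measurability of the gradient maps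
  have hg_meas : ∀ i, Measurable (g i) := by
    intro i
    have : Measurable (fderiv ℝ (Φ i)) := measurable_fderiv ℝ (Φ i)
    exact ((InnerProductSpace.toDual ℝ (EuclideanSpace ℝ (Fin n))).symm.continuous.measurable).comp this
  have hZpos : ∀ i, 0 < Z i := hV_pos
  -- the ENNReal integrands
  set F : Fin k → EuclideanSpace ℝ (Fin n) → ENNReal := fun i y =>
    ENNReal.ofReal (Real.exp (V i (g i y) - U i (g i y))) with hF
  have hF_meas : ∀ i, Measurable (F i) := by
    intro i
    exact ENNReal.measurable_ofReal.comp (Real.measurable_exp.comp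
      (((hV_meas i).comp (hg_meas i)).sub ((hU_meas i).comp (hg_meas i))))
  -- Step 1 : ∫⁻ F i ∂μ = AU i * (ofReal (Z i))⁻¹
  have hstep1 : ∀ i, ∫⁻ y, F i y ∂μ
      = (∫⁻ x, ENNReal.ofReal (Real.exp (-(U i x)))) * (ENNReal.ofReal (Z i))⁻¹ := by
    intro i
    have hmf : Measurable fun x : EuclideanSpace ℝ (Fin n) => ENNReal.ofReal (Real.exp (V i x - U i x)) :=
      ENNReal.measurable_ofReal.comp (Real.measurable_exp.comp ((hV_meas i).sub (hU_meas i)))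
    have h1 : ∫⁻ y, F i y ∂μ
        = ∫⁻ x, ENNReal.ofReal (Real.exp (V i x - U i x)) ∂(Measure.map (g i) μ) := by
      rw [lintegral_map hmf (hg_meas i)]
    rw [h1, hΦ_push i]
    have hd_meas : Measurable fun x : EuclideanSpace ℝ (Fin n) => ENNReal.ofReal (Real.exp (-(V i x)) / Z i) :=
      ENNReal.measurable_ofReal.comp ((Real.measurable_exp.comp (hV_meas i).neg).div_const _)
    rw [lintegral_withDensity_eq_lintegral_mul _ hd_meas hmf]
    have hpt : ∀ x : EuclideanSpace ℝ (Fin n), (ENNReal.ofReal (Real.exp (-(V i x)) / Z i)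
        * ENNReal.ofReal (Real.exp (V i x - U i x)))
        = ENNReal.ofReal (Real.exp (-(U i x))) * (ENNReal.ofReal (Z i))⁻¹ := by
      intro x
      rw [← ENNReal.ofReal_mul (by positivity)]
      have hre : Real.exp (-(V i x)) / Z i * Real.exp (V i x - U i x)
          = Real.exp (-(U i x)) / Z i := by
        rw [div_mul_eq_mul_div, ← Real.exp_add]
        congr 2
        ring
      rw [hre, ENNReal.ofReal_div_of_pos (hZpos i), div_eq_mul_inv]
    calc ∫⁻ x, (fun x => ENNReal.ofReal (Real.exp (-(V i x)) / Z i)) x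
          * (fun x => ENNReal.ofReal (Real.exp (V i x - U i x))) x
        = ∫⁻ x, ENNReal.ofReal (Real.exp (-(U i x))) * (ENNReal.ofReal (Z i))⁻¹ := by
          simp only [hpt]
      _ = (∫⁻ x, ENNReal.ofReal (Real.exp (-(U i x)))) * (ENNReal.ofReal (Z i))⁻¹ :=
          lintegral_mul_const _ (ENNReal.measurable_ofReal.comp
            (Real.measurable_exp.comp (hU_meas i).neg))
  -- Step 2 : 1 ≤ ∫⁻ ∏ F i ^ lam i ∂μ
  have hstep2 : (1 : ENNReal) ≤ ∫⁻ y, ∏ i : Fin k, F i y ^ lam i ∂μ := by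
    have hae : ∀ᵐ y ∂μ, (1 : ENNReal) ≤ ∏ i : Fin k, F i y ^ lam i := by
      filter_upwards [hU_dual] with y hy
      have hS : 0 ≤ ∑ i : Fin k, (V i (g i y) - U i (g i y)) * lam i := by
        have h1 := hV_cond fun i => g i y
        have h2 : ∑ i : Fin k, lam i * U i (g i y)
            ≤ ∑ i : Fin k, lam i * V i (g i y) := hy ▸ h1
        have : ∑ i : Fin k, (V i (g i y) - U i (g i y)) * lam i
            = (∑ i : Fin k, lam i * V i (g i y)) - ∑ i : Fin k, lam i * U i (g i y) := by
          rw [← Finset.sum_sub_distrib]; congr 1; ext i; ring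
        rw [this]; linarith
      have hprod : ∏ i : Fin k, F i y ^ lam i
          = ENNReal.ofReal (Real.exp (∑ i : Fin k, (V i (g i y) - U i (g i y)) * lam i)) := by
        rw [Real.exp_sum, ENNReal.ofReal_prod_of_nonneg (fun i _ => (Real.exp_pos _).le)]
        congr 1; ext i
        rw [hF, ENNReal.ofReal_rpow_of_nonneg (Real.exp_pos _).le (hlam0 i), ← Real.exp_mul]
      rw [hprod]
      calc (1:ENNReal) = ENNReal.ofReal (Real.exp 0) := by simp
        _ ≤ _ := by
            apply ENNReal.ofReal_le_ofReal
            exact Real.exp_le_exp.2 hS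
    calc (1:ENNReal) = ∫⁻ _, (1:ENNReal) ∂μ := by simp
      _ ≤ _ := lintegral_mono_ae hae
  -- Step 3 : Hölder
  have hholder : ∫⁻ y, ∏ i : Fin k, F i y ^ lam i ∂μ
      ≤ ∏ i : Fin k, (∫⁻ y, F i y ∂μ) ^ lam i :=
    ENNReal.lintegral_prod_norm_pow_le Finset.univ
      (fun i _ => (hF_meas i).aemeasurable) hlam_sum (fun i _ => hlam0 i)
  -- put things together
  set AU : Fin k → ENNReal := fun i => ∫⁻ x, ENNReal.ofReal (Real.exp (-(U i x))) with hAU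
  have hAUeq : ∀ i, AU i = ENNReal.ofReal (J i) := by
    intro i
    rw [hAU]
    exact (ofReal_integral_eq_lintegral_ofReal (hU_int i)
      (Filter.Eventually.of_forall fun x => (Real.exp_pos _).le)).symm
  have hmain : (1 : ENNReal)
      ≤ (∏ i : Fin k, (AU i) ^ lam i) * (∏ i : Fin k, (ENNReal.ofReal (Z i)) ^ lam i)⁻¹ := by
    refine le_trans hstep2 (le_trans hholder ?_)
    have : ∀ i : Fin k, (∫⁻ y, F i y ∂μ) ^ lam i
        = (AU i) ^ lam i * ((ENNReal.ofReal (Z i)) ^ lam i)⁻¹ := by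
      intro i
      rw [hstep1 i, ENNReal.mul_rpow_of_nonneg _ _ (hlam0 i), ENNReal.inv_rpow]
    rw [Finset.prod_congr rfl fun i _ => this i, Finset.prod_mul_distrib,
      ← ENNReal.prod_inv_distrib (fun i _ j _ _ =>
        Or.inr (ENNReal.rpow_lt_top_of_nonneg (hlam0 j) ENNReal.ofReal_ne_top).ne)]
  have hBne0 : (∏ i : Fin k, (ENNReal.ofReal (Z i)) ^ lam i) ≠ 0 := by
    rw [Finset.prod_ne_zero_iff]
    intro i _
    exact (ENNReal.rpow_pos (ENNReal.ofReal_pos.2 (hZpos i)) ENNReal.ofReal_ne_top).ne'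
  have hBnetop : (∏ i : Fin k, (ENNReal.ofReal (Z i)) ^ lam i) ≠ ⊤ := by
    exact (ENNReal.prod_lt_top fun i _ =>
      ENNReal.rpow_lt_top_of_nonneg (hlam0 i) ENNReal.ofReal_ne_top).ne
  have hBA : (∏ i : Fin k, (ENNReal.ofReal (Z i)) ^ lam i)
      ≤ ∏ i : Fin k, (AU i) ^ lam i := by
    have := mul_le_mul_left hmain (∏ i : Fin k, (ENNReal.ofReal (Z i)) ^ lam i)
    rwa [one_mul, mul_assoc, ENNReal.inv_mul_cancel hBne0 hBnetop, mul_one] at this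
  -- convert back to real numbers
  have hconv : ∀ (c : Fin k → ℝ), (∀ i, 0 ≤ c i) →
      ∏ i : Fin k, (ENNReal.ofReal (c i)) ^ lam i
        = ENNReal.ofReal (∏ i : Fin k, (c i) ^ lam i) := by
    intro c hc
    rw [ENNReal.ofReal_prod_of_nonneg (fun i _ => Real.rpow_nonneg (hc i) _)]
    exact Finset.prod_congr rfl fun i _ =>
      ENNReal.ofReal_rpow_of_nonneg (hc i) (hlam0 i)
  rw [hconv Z (fun i => (hZpos i).le)] at hBA
  have hAU' : ∏ i : Fin k, (AU i) ^ lam i = ENNReal.ofReal (∏ i : Fin k, (J i) ^ lam i) := by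
    rw [Finset.prod_congr rfl fun i _ => by rw [hAUeq i]]
    exact hconv J fun i => integral_nonneg fun x => (Real.exp_pos _).le
  rw [hAU'] at hBA
  exact (ENNReal.ofReal_le_ofReal_iff
    (Finset.prod_nonneg fun i _ => Real.rpow_nonneg
      (integral_nonneg fun x => (Real.exp_pos _).le) _)).1 hBA
end
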